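/- Let ψ be constructed from a 3CNF formula φ as follows: for each variable x_i with occurrences indexed by the clauses containing it, fix a 1-expander graph G_i on those occurrences; ψ has variables y_{i,j}, one primary clause per clause of φ (with each literal on x_i in C_j replaced by the corresponding literal on y_{i,j}), and consistency clauses (y_{i,j} ∨ ¬y_{i,j'}) and (¬y_{i,j} ∨ y_{i,j'}) for each expander edge. If some assignment for ψ leaves at most k clauses of ψ unsatisfied, then there is an assignment for φ leaving at most k clauses of φ unsatisfied; in particular, setting each x_i to the majority value of {a_{i,j} : x_i ∈ C_j} of a given ψ-assignment a contradicts at most k clauses of φ. -/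

import Mathlib

set_option maxHeartbeats 1000000

lemma sum_countP_le' {ι α : Type*} (I : Finset ι) (p : ι → α → Bool) (q : α → Bool)
    (l : List α)
    (h : ∀ a ∈ l, (∑ i ∈ I, (if p i a then 1 else 0)) ≤ (if q a then 1 else 0)) :
    (∑ i ∈ I, l.countP (p i)) ≤ l.countP q := by
  induction l with
  | nil => simp
  | cons a l ih =>
    simp only [List.countP_cons]
    rw [Finset.sum_add_distrib]
    have h1 := h a (List.mem_cons_self (a := a) (l := l))
    have h2 := ih (fun x hx => h x (List.mem_cons_of_mem _ hx))
    omega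

/-- Expander-based reduction to bounded occurrences, soundness direction.
With the same construction of `ψ` from `φ` (primary clauses on occurrence variables,
two consistency clauses per 1-expander edge — an edge contributes exactly one
unsatisfied clause when its endpoints disagree): if an assignment `b` for `ψ` leaves
at most `k` clauses of `ψ` unsatisfied, then some assignment for `φ` leaves at most
`k` clauses of `φ` unsatisfied; in particular, every majority rounding `σ` of `b`
(for each variable `i`, `σ i` agrees with `b` on at least half of the occurrences
of `i`) contradicts at most `k` clauses of `φ`. -/
theorem expander_reduction_soundness (m k : ℕ)
    (φ : Fin m → Fin 3 → ℕ × Bool)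
    (Edges : List ((Fin m × Fin 3) × (Fin m × Fin 3)))
    (hEdgeVar : ∀ e ∈ Edges, (φ e.1.1 e.1.2).1 = (φ e.2.1 e.2.2).1)
    (hExpander : ∀ (i : ℕ) (S : Finset (Fin m × Fin 3)),
      (∀ p ∈ S, (φ p.1 p.2).1 = i) →
      2 * S.card ≤ (Finset.univ.filter
        (fun p : Fin m × Fin 3 => (φ p.1 p.2).1 = i)).card →
      S.card ≤ Edges.countP (fun e =>
        decide ((e.1 ∈ S ∧ e.2 ∉ S) ∨ (e.1 ∉ S ∧ e.2 ∈ S))))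
    (b : Fin m × Fin 3 → Bool)
    (hb : (Finset.univ.filter
        (fun j : Fin m => ¬ ∃ a : Fin 3, b (j, a) = (φ j a).2)).card
      + Edges.countP (fun e => b e.1 != b e.2) ≤ k) :
    (∃ σ : ℕ → Bool,
      (Finset.univ.filter
        (fun j : Fin m => ¬ ∃ a : Fin 3, σ (φ j a).1 = (φ j a).2)).card ≤ k) ∧
    (∀ σ : ℕ → Bool,
      (∀ i : ℕ,
        (Finset.univ.filter (fun p : Fin m × Fin 3 => (φ p.1 p.2).1 = i)).card ≤
          2 * ((Finset.univ.filter (fun p : Fin m × Fin 3 => (φ p.1 p.2).1 = i)).filter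
            (fun p => b p = σ i)).card) →
      (Finset.univ.filter
        (fun j : Fin m => ¬ ∃ a : Fin 3, σ (φ j a).1 = (φ j a).2)).card ≤ k) := by
  classical
  set T : ℕ → Finset (Fin m × Fin 3) :=
    fun i => Finset.univ.filter (fun p : Fin m × Fin 3 => (φ p.1 p.2).1 = i) with hT
  have key : ∀ σ : ℕ → Bool,
      (∀ i : ℕ, (T i).card ≤ 2 * ((T i).filter (fun p => b p = σ i)).card) →
      (Finset.univ.filter
        (fun j : Fin m => ¬ ∃ a : Fin 3, σ (φ j a).1 = (φ j a).2)).card ≤ k := by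
    intro σ hmaj
    set D : Finset (Fin m × Fin 3) :=
      Finset.univ.filter (fun p => ¬ b p = σ (φ p.1 p.2).1) with hD
    set S : ℕ → Finset (Fin m × Fin 3) :=
      fun i => D.filter (fun p => (φ p.1 p.2).1 = i) with hS
    set I : Finset ℕ := D.image (fun p => (φ p.1 p.2).1) with hI
    -- decomposition of D
    have hDcard : D.card = ∑ i ∈ I, (S i).card := by
      apply Finset.card_eq_sum_card_fiberwise
      intro p hp
      exact Finset.mem_image.2 ⟨p, hp, rfl⟩
    -- per-variable expander bound
    have hSbound : ∀ i ∈ I, (S i).card ≤ Edges.countP (fun e =>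
        decide ((e.1 ∈ S i ∧ e.2 ∉ S i) ∨ (e.1 ∉ S i ∧ e.2 ∈ S i))) := by
      intro i _
      apply hExpander i (S i)
      · intro p hp
        exact (Finset.mem_filter.1 hp).2
      · show 2 * (S i).card ≤ (T i).card
        have hsub : S i ∪ (T i).filter (fun p => b p = σ i) ⊆ T i := by
          intro p hp
          rcases Finset.mem_union.1 hp with h | h
          · exact Finset.mem_filter.2 ⟨Finset.mem_univ _, (Finset.mem_filter.1 h).2⟩
          · exact (Finset.mem_filter.1 h).1
        have hdisj : Disjoint (S i) ((T i).filter (fun p => b p = σ i)) := by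
          rw [Finset.disjoint_left]
          intro p hp hp2
          have h1 := (Finset.mem_filter.1 (Finset.mem_filter.1 hp).1).2
          have h2 := (Finset.mem_filter.1 hp2).2
          have h3 := (Finset.mem_filter.1 hp).2
          rw [h3] at h1
          exact h1 h2
        have := Finset.card_le_card hsub
        rw [Finset.card_union_of_disjoint hdisj] at this
        have h4 := hmaj i
        omega
    -- cumulative edge bound
    have hsum : ∑ i ∈ I, Edges.countP (fun e =>
        decide ((e.1 ∈ S i ∧ e.2 ∉ S i) ∨ (e.1 ∉ S i ∧ e.2 ∈ S i)))
        ≤ Edges.countP (fun e => b e.1 != b e.2) := by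
      apply sum_countP_le'
      intro e he
      have hvar := hEdgeVar e he
      -- pred i e implies i = var e.1 and b e.1 ≠ b e.2
      have hkey : ∀ i, ((e.1 ∈ S i ∧ e.2 ∉ S i) ∨ (e.1 ∉ S i ∧ e.2 ∈ S i)) →
          i = (φ e.1.1 e.1.2).1 ∧ (b e.1 != b e.2) = true := by
        intro i hi
        rcases hi with ⟨h1, h2⟩ | ⟨h1, h2⟩
        · have hm := Finset.mem_filter.1 h1
          have hv1 : (φ e.1.1 e.1.2).1 = i := hm.2
          have hb1 : ¬ b e.1 = σ i := by
            have := (Finset.mem_filter.1 hm.1).2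
            rwa [hv1] at this
          have hv2 : (φ e.2.1 e.2.2).1 = i := by rw [← hvar]; exact hv1
          have hb2 : b e.2 = σ i := by
            by_contra hc
            exact h2 (Finset.mem_filter.2 ⟨Finset.mem_filter.2
              ⟨Finset.mem_univ _, by rwa [hv2]⟩, hv2⟩)
          refine ⟨hv1.symm, ?_⟩
          rw [bne_iff_ne]
          intro hbe; rw [hbe] at hb1; exact hb1 hb2
        · have hm := Finset.mem_filter.1 h2
          have hv2 : (φ e.2.1 e.2.2).1 = i := hm.2
          have hb2 : ¬ b e.2 = σ i := by
            have := (Finset.mem_filter.1 hm.1).2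
            rwa [hv2] at this
          have hv1 : (φ e.1.1 e.1.2).1 = i := by rw [hvar]; exact hv2
          have hb1 : b e.1 = σ i := by
            by_contra hc
            exact h1 (Finset.mem_filter.2 ⟨Finset.mem_filter.2
              ⟨Finset.mem_univ _, by rwa [hv1]⟩, hv1⟩)
          refine ⟨hv1.symm, ?_⟩
          rw [bne_iff_ne]
          intro hbe; rw [← hbe] at hb2; exact hb2 hb1
      have hcard : (∑ i ∈ I, (if (decide ((e.1 ∈ S i ∧ e.2 ∉ S i) ∨ (e.1 ∉ S i ∧ e.2 ∈ S i))) then 1 else 0))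
          = (I.filter (fun i => ((e.1 ∈ S i ∧ e.2 ∉ S i) ∨ (e.1 ∉ S i ∧ e.2 ∈ S i)))).card := by
        rw [Finset.card_filter]
        apply Finset.sum_congr rfl
        intro i _
        simp
      rw [hcard]
      by_cases hex : ∃ i ∈ I, ((e.1 ∈ S i ∧ e.2 ∉ S i) ∨ (e.1 ∉ S i ∧ e.2 ∈ S i))
      · obtain ⟨i0, hi0, hp0⟩ := hex
        have hq := (hkey i0 hp0).2
        rw [hq]
        simp only [if_true]
        have hsub : (I.filter (fun i => ((e.1 ∈ S i ∧ e.2 ∉ S i) ∨ (e.1 ∉ S i ∧ e.2 ∈ S i))))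
            ⊆ {(φ e.1.1 e.1.2).1} := by
          intro i hi
          have := (hkey i (Finset.mem_filter.1 hi).2).1
          simp [this]
        have := Finset.card_le_card hsub
        simpa using this
      · have : (I.filter (fun i => ((e.1 ∈ S i ∧ e.2 ∉ S i) ∨ (e.1 ∉ S i ∧ e.2 ∈ S i)))) = ∅ := by
          apply Finset.filter_eq_empty_iff.2
          intro i hi hc
          exact hex ⟨i, hi, hc⟩
        rw [this]
        simp
    -- now the clause counting
    set U : Finset (Fin m) := Finset.univ.filter
      (fun j : Fin m => ¬ ∃ a : Fin 3, σ (φ j a).1 = (φ j a).2) with hU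
    set V : Finset (Fin m) := Finset.univ.filter
      (fun j : Fin m => ¬ ∃ a : Fin 3, b (j, a) = (φ j a).2) with hV
    have hchoice : ∀ j ∈ U \ V, ∃ a : Fin 3, (j, a) ∈ D := by
      intro j hj
      rw [Finset.mem_sdiff] at hj
      have hU' := (Finset.mem_filter.1 hj.1).2
      have hV' : ∃ a : Fin 3, b (j, a) = (φ j a).2 := by
        by_contra hc
        exact hj.2 (Finset.mem_filter.2 ⟨Finset.mem_univ _, hc⟩)
      obtain ⟨a, ha⟩ := hV'
      refine ⟨a, Finset.mem_filter.2 ⟨Finset.mem_univ _, ?_⟩⟩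
      intro hc
      exact hU' ⟨a, by rw [← hc, ha]⟩
    have hchoice' : ∀ j : Fin m, ∃ a : Fin 3, (j ∈ U \ V → (j, a) ∈ D) := by
      intro j
      by_cases h : j ∈ U \ V
      · exact (hchoice j h).imp (fun a ha _ => ha)
      · exact ⟨0, fun h' => absurd h' h⟩
    obtain ⟨f, hf⟩ := Classical.axiomOfChoice hchoice'
    have hUV : (U \ V).card ≤ D.card := by
      apply Finset.card_le_card_of_injOn (fun j => (j, f j))
      · intro j hj
        exact hf j hj
      · intro a _ b _ h
        exact congrArg Prod.fst h
    have hUcard : U.card ≤ V.card + (U \ V).card := by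
      have : U ⊆ V ∪ (U \ V) := by
        intro j hj
        by_cases h : j ∈ V
        · exact Finset.mem_union_left _ h
        · exact Finset.mem_union_right _ (Finset.mem_sdiff.2 ⟨hj, h⟩)
      calc U.card ≤ (V ∪ (U \ V)).card := Finset.card_le_card this
        _ ≤ V.card + (U \ V).card := Finset.card_union_le _ _
    have hfinal : ∑ i ∈ I, (S i).card ≤ Edges.countP (fun e => b e.1 != b e.2) :=
      le_trans (Finset.sum_le_sum hSbound) hsum
    omega
  constructor
  · set σ₀ : ℕ → Bool := fun i => decide (((T i).filter (fun p => b p = false)).card ≤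
      ((T i).filter (fun p => b p = true)).card) with hσ₀
    refine ⟨σ₀, key σ₀ ?_⟩
    intro i
    have hpart := Finset.card_filter_add_card_filter_not (s := T i)
      (p := fun p => b p = true)
    have heq : (T i).filter (fun a => ¬ b a = true) = (T i).filter (fun p => b p = false) := by
      apply Finset.filter_congr
      intro p _
      simp
    rw [heq] at hpart
    by_cases h : ((T i).filter (fun p => b p = false)).card ≤
        ((T i).filter (fun p => b p = true)).card
    · have hs : σ₀ i = true := by simp only [hσ₀]; exact decide_eq_true h
      rw [hs]
      omega
    · have hs : σ₀ i = false := by simp only [hσ₀]; exact decide_eq_false h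
      rw [hs]
      omega
  · exact key
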